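/- arXiv:1805.01708 — 2 statements merged into one kernel-verified Lean document; each statement's English description precedes it below -/
import Mathlib

section
/- Assume $I_{ion}(v,g)=\sum_{j=1}^m H_j(g_j)(v-v_{r,j})$ where each $H_j:\mathbb{R}\to\mathbb{R}$ is bounded by $M$, positive, and Lipschitz with constant $L_1$, and $F:\mathbb{R}\to\mathbb{R}^m$ is Lipschitz with constant $L_2$. Let $\langle g,v\rangle(t)=e^{-\alpha t}(G_0+\int_0^t F(v(\tau))e^{\alpha\tau}d\tau)$ for $\alpha>0$ and fixed $G_0\in\mathbb{R}^m$. Then the map $v\mapsto I_{ion}(v(t),\langle g,v\rangle(t))$ is Lipschitz continuous from bounded subsets of $C([0,T];\mathbb{R})$ (sup norm) to $C([0,T];\mathbb{R})$. -/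
open Real MeasureTheory intervalIntegral Finset

lemma euclid_abs_apply_le_norm {m : ℕ} (x : EuclideanSpace ℝ (Fin m)) (j : Fin m) :
    |x j| ≤ ‖x‖ := by
  rw [EuclideanSpace.norm_eq, ← Real.sqrt_sq_eq_abs]
  apply Real.sqrt_le_sqrt
  calc x j ^ 2 = ‖x j‖ ^ 2 := by rw [Real.norm_eq_abs, sq_abs]
    _ ≤ ∑ i : Fin m, ‖x i‖ ^ 2 :=
      Finset.single_le_sum (f := fun i => ‖x i‖ ^ 2) (fun i _ => sq_nonneg _) (Finset.mem_univ j)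

theorem stmt3 (m : ℕ) (α T L1 L2 M : ℝ) (hα : 0 < α) (hT : 0 < T)
    (hL1 : 0 ≤ L1) (hL2 : 0 ≤ L2) (hM : 0 < M)
    (H : Fin m → ℝ → ℝ)
    (hHpos : ∀ j x, 0 < H j x) (hHbdd : ∀ j x, H j x ≤ M)
    (hHlip : ∀ j, LipschitzWith (Real.toNNReal L1) (H j))
    (F : ℝ → EuclideanSpace ℝ (Fin m)) (hF : LipschitzWith (Real.toNNReal L2) F)
    (G0 : EuclideanSpace ℝ (Fin m)) (vr : Fin m → ℝ)
    (Iion : ℝ → EuclideanSpace ℝ (Fin m) → ℝ)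
    (hIion : ∀ v g, Iion v g = ∑ j : Fin m, H j (g j) * (v - vr j))
    (S : (ℝ → ℝ) → ℝ → EuclideanSpace ℝ (Fin m))
    (hS : ∀ v t, S v t = Real.exp (-α * t) •
      (G0 + ∫ τ in (0:ℝ)..t, Real.exp (α * τ) • F (v τ))) :
    ∀ R : ℝ, 0 < R → ∃ K : ℝ, 0 < K ∧
      ∀ v₁ v₂ : ℝ → ℝ, Continuous v₁ → Continuous v₂ →
        (∀ t ∈ Set.Icc (0:ℝ) T, |v₁ t| ≤ R) →
        (∀ t ∈ Set.Icc (0:ℝ) T, |v₂ t| ≤ R) →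
        ∀ N : ℝ, (∀ τ ∈ Set.Icc (0:ℝ) T, |v₁ τ - v₂ τ| ≤ N) →
          ∀ t ∈ Set.Icc (0:ℝ) T,
            |Iion (v₁ t) (S v₁ t) - Iion (v₂ t) (S v₂ t)| ≤ K * N := by
  intro R hR
  set C : ℝ := L1 * (L2 * T * Real.exp (α * T)) with hC
  have hCnn : 0 ≤ C := by positivity
  refine ⟨(∑ j : Fin m, (M + C * (R + |vr j|))) + 1, ?_, ?_⟩
  · have : 0 ≤ ∑ j : Fin m, (M + C * (R + |vr j|)) := by
      apply Finset.sum_nonneg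
      intro j _
      have : 0 ≤ R + |vr j| := by positivity
      nlinarith [hM.le]
    linarith
  intro v₁ v₂ hv₁ hv₂ hb₁ hb₂ N hN t ht
  obtain ⟨ht0, htT⟩ := ht
  have hN0 : 0 ≤ N := le_trans (abs_nonneg _) (hN 0 ⟨le_rfl, hT.le⟩)
  -- bound on the gating variable difference
  have hint : ∀ v : ℝ → ℝ, Continuous v →
      IntervalIntegrable (fun τ => Real.exp (α * τ) • F (v τ)) volume 0 t := by
    intro v hv
    exact (Continuous.smul (f := fun τ => Real.exp (α * τ)) (by continuity) (hF.continuous.comp hv)).intervalIntegrable (μ := volume) 0 t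
  have hSbound : ‖S v₁ t - S v₂ t‖ ≤ L2 * T * Real.exp (α * T) * N := by
    have h1 := hint v₁ hv₁
    have h2 := hint v₂ hv₂
    have key : S v₁ t - S v₂ t = Real.exp (-α * t) •
        (∫ τ in (0:ℝ)..t, (Real.exp (α * τ) • F (v₁ τ) - Real.exp (α * τ) • F (v₂ τ))) := by
      rw [hS, hS, ← smul_sub, add_sub_add_left_eq_sub, intervalIntegral.integral_sub h1 h2]
    rw [key, norm_smul, Real.norm_eq_abs, abs_of_pos (Real.exp_pos _)]
    have hexp1 : Real.exp (-α * t) ≤ 1 := by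
      apply Real.exp_le_one_iff.mpr
      nlinarith
    have hIb : ‖∫ τ in (0:ℝ)..t, (Real.exp (α * τ) • F (v₁ τ) - Real.exp (α * τ) • F (v₂ τ))‖
        ≤ (Real.exp (α * T) * (L2 * N)) * |t - 0| := by
      apply intervalIntegral.norm_integral_le_of_norm_le_const
      intro τ hτ
      rw [Set.uIoc_of_le ht0] at hτ
      have hτ0 : 0 ≤ τ := hτ.1.le
      have hτT : τ ≤ T := hτ.2.trans htT
      rw [← smul_sub, norm_smul, Real.norm_eq_abs, abs_of_pos (Real.exp_pos _)]
      have hFd : ‖F (v₁ τ) - F (v₂ τ)‖ ≤ L2 * N := by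
        have := hF.dist_le_mul (v₁ τ) (v₂ τ)
        rw [Real.coe_toNNReal L2 hL2, dist_eq_norm, dist_eq_norm] at this
        refine this.trans ?_
        have := hN τ ⟨hτ0, hτT⟩
        rw [Real.norm_eq_abs]
        nlinarith
      have hexp : Real.exp (α * τ) ≤ Real.exp (α * T) := by
        apply Real.exp_le_exp.mpr; nlinarith
      have h0 : 0 ≤ Real.exp (α * τ) := (Real.exp_pos _).le
      exact mul_le_mul hexp hFd (norm_nonneg _) (Real.exp_pos _).le
    have habs : |t - 0| ≤ T := by rw [sub_zero, abs_of_nonneg ht0]; exact htT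
    have hnn : (0:ℝ) ≤ Real.exp (α * T) * (L2 * N) := by positivity
    have h4 := mul_le_mul hexp1 hIb (norm_nonneg _) zero_le_one
    rw [one_mul] at h4
    have h5 : (Real.exp (α * T) * (L2 * N)) * |t - 0| ≤ (Real.exp (α * T) * (L2 * N)) * T :=
      mul_le_mul_of_nonneg_left habs hnn
    have h6 : (Real.exp (α * T) * (L2 * N)) * T = L2 * T * Real.exp (α * T) * N := by ring
    linarith
  -- componentwise bound
  have hgj : ∀ j : Fin m, |S v₁ t j - S v₂ t j| ≤ L2 * T * Real.exp (α * T) * N := by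
    intro j
    have : |(S v₁ t - S v₂ t) j| ≤ ‖S v₁ t - S v₂ t‖ := euclid_abs_apply_le_norm _ j
    simpa using this.trans hSbound
  -- main estimate
  rw [hIion, hIion, ← Finset.sum_sub_distrib]
  refine (Finset.abs_sum_le_sum_abs _ _).trans ?_
  have hterm : ∀ j : Fin m,
      |H j (S v₁ t j) * (v₁ t - vr j) - H j (S v₂ t j) * (v₂ t - vr j)|
        ≤ (M + C * (R + |vr j|)) * N := by
    intro j
    have hvd : |v₁ t - v₂ t| ≤ N := hN t ⟨ht0, htT⟩
    have hHd : |H j (S v₁ t j) - H j (S v₂ t j)| ≤ L1 * (L2 * T * Real.exp (α * T) * N) := by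
      have := (hHlip j).dist_le_mul (S v₁ t j) (S v₂ t j)
      rw [Real.coe_toNNReal L1 hL1, Real.dist_eq, Real.dist_eq] at this
      refine this.trans ?_
      exact mul_le_mul_of_nonneg_left (hgj j) hL1
    have hH1 : |H j (S v₁ t j)| ≤ M := by
      rw [abs_of_pos (hHpos j _)]; exact hHbdd j _
    have hv2 : |v₂ t - vr j| ≤ R + |vr j| := by
      have := hb₂ t ⟨ht0, htT⟩
      calc |v₂ t - vr j| ≤ |v₂ t| + |vr j| := abs_sub _ _
        _ ≤ R + |vr j| := by linarith
    have key : H j (S v₁ t j) * (v₁ t - vr j) - H j (S v₂ t j) * (v₂ t - vr j)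
        = H j (S v₁ t j) * (v₁ t - v₂ t)
          + (H j (S v₁ t j) - H j (S v₂ t j)) * (v₂ t - vr j) := by ring
    rw [key]
    calc |H j (S v₁ t j) * (v₁ t - v₂ t) + (H j (S v₁ t j) - H j (S v₂ t j)) * (v₂ t - vr j)|
        ≤ |H j (S v₁ t j) * (v₁ t - v₂ t)|
          + |(H j (S v₁ t j) - H j (S v₂ t j)) * (v₂ t - vr j)| := abs_add_le _ _
      _ = |H j (S v₁ t j)| * |v₁ t - v₂ t|
          + |H j (S v₁ t j) - H j (S v₂ t j)| * |v₂ t - vr j| := by rw [abs_mul, abs_mul]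
      _ ≤ M * N + (L1 * (L2 * T * Real.exp (α * T) * N)) * (R + |vr j|) := by
          have e1 : |H j (S v₁ t j)| * |v₁ t - v₂ t| ≤ M * N :=
            mul_le_mul hH1 hvd (abs_nonneg _) hM.le
          have e2 : |H j (S v₁ t j) - H j (S v₂ t j)| * |v₂ t - vr j|
              ≤ (L1 * (L2 * T * Real.exp (α * T) * N)) * (R + |vr j|) :=
            mul_le_mul hHd hv2 (abs_nonneg _) (by positivity)
          linarith
      _ = (M + C * (R + |vr j|)) * N := by rw [hC]; ring
  calc ∑ j : Fin m, |H j (S v₁ t j) * (v₁ t - vr j) - H j (S v₂ t j) * (v₂ t - vr j)|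
      ≤ ∑ j : Fin m, (M + C * (R + |vr j|)) * N := Finset.sum_le_sum fun j _ => hterm j
    _ = (∑ j : Fin m, (M + C * (R + |vr j|))) * N := by rw [← Finset.sum_mul]
    _ ≤ ((∑ j : Fin m, (M + C * (R + |vr j|))) + 1) * N := by nlinarith
end

section
/- Let $\sigma_i,\sigma_e>0$, $\varphi_B\in(0,\pi)$, and $\delta>0$ small. Consider the transcendental equation in $\alpha$: $\alpha\sigma_i\tan(\alpha\delta\pi)=\sigma_e\alpha\tan(\alpha\delta(\varphi_B-\pi))\big(1-\frac{\alpha\sigma_i}{\delta}\tan(\alpha\delta\pi)\varphi_B\big)$. Then for sufficiently small $\delta$ there is a unique solution $\alpha_\delta\in(0,1/(2\delta))$, and $\alpha_\delta = \frac{1}{\sqrt{\varphi_B}}\sqrt{\frac{1}{\sigma_i\pi}+\frac{1}{\sigma_e(\pi-\varphi_B)}} + O(\delta^2)$ as $\delta\to 0$. -/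
open Real Set

noncomputable def auxG (σi σe φB t : ℝ) : ℝ :=
  σi / (t * Real.tan (t * (Real.pi - φB))) + σe / (t * Real.tan (t * Real.pi))

lemma aux_arg {c t : ℝ} (hc : 0 < c) (hcπ : c ≤ Real.pi) (ht : 0 < t) (ht2 : t < 1/2) :
    0 < t * c ∧ t * c < Real.pi / 2 := by
  constructor
  · positivity
  · nlinarith [Real.pi_pos, mul_nonneg ht.le (sub_nonneg.2 hcπ)]

lemma aux_tan_pos {c t : ℝ} (hc : 0 < c) (hcπ : c ≤ Real.pi) (ht : 0 < t) (ht2 : t < 1/2) :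
    0 < Real.tan (t * c) :=
  (aux_arg hc hcπ ht ht2).elim fun h1 h2 => Real.tan_pos_of_pos_of_lt_pi_div_two h1 h2

lemma aux_tan_ge {c t : ℝ} (hc : 0 < c) (hcπ : c ≤ Real.pi) (ht : 0 < t) (ht2 : t < 1/2) :
    t * c ≤ Real.tan (t * c) :=
  (aux_arg hc hcπ ht ht2).elim fun h1 h2 => (Real.lt_tan h1 h2).le

lemma aux_mono {c t₁ t₂ : ℝ} (hc : 0 < c) (hcπ : c ≤ Real.pi) (h1 : 0 < t₁)
    (h12 : t₁ < t₂) (h2 : t₂ < 1/2) :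
    t₁ * Real.tan (t₁ * c) < t₂ * Real.tan (t₂ * c) := by
  have ht1 := aux_tan_pos hc hcπ h1 (h12.trans h2)
  have harg := aux_arg hc hcπ (h1.trans h12) h2
  have htan : Real.tan (t₁ * c) < Real.tan (t₂ * c) :=
    Real.tan_lt_tan_of_nonneg_of_lt_pi_div_two (by positivity) harg.2
      (by exact mul_lt_mul_of_pos_right h12 hc)
  exact mul_lt_mul'' h12 htan h1.le ht1.le


lemma auxG_anti {σi σe φB t₁ t₂ : ℝ} (hσi : 0 < σi) (hσe : 0 < σe)
    (hφB : φB ∈ Set.Ioo 0 Real.pi) (h1 : 0 < t₁) (h12 : t₁ < t₂) (h2 : t₂ < 1/2) :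
    auxG σi σe φB t₂ < auxG σi σe φB t₁ := by
  have hc : 0 < Real.pi - φB := by linarith [hφB.2]
  have hcπ : Real.pi - φB ≤ Real.pi := by linarith [hφB.1]
  have d1 := aux_mono hc hcπ h1 h12 h2
  have d2 := aux_mono (Real.pi_pos) le_rfl h1 h12 h2
  have p1 : 0 < t₁ * Real.tan (t₁ * (Real.pi - φB)) :=
    mul_pos h1 (aux_tan_pos hc hcπ h1 (h12.trans h2))
  have p2 : 0 < t₁ * Real.tan (t₁ * Real.pi) :=
    mul_pos h1 (aux_tan_pos Real.pi_pos le_rfl h1 (h12.trans h2))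
  unfold auxG
  exact add_lt_add (div_lt_div_of_pos_left hσi p1 d1) (div_lt_div_of_pos_left hσe p2 d2)

lemma auxG_le {σi σe φB t : ℝ} (hσi : 0 < σi) (hσe : 0 < σe)
    (hφB : φB ∈ Set.Ioo 0 Real.pi) (ht : 0 < t) (ht2 : t < 1/2) :
    auxG σi σe φB t ≤ (σi / (Real.pi - φB) + σe / Real.pi) / t ^ 2 := by
  have hc : 0 < Real.pi - φB := by linarith [hφB.2]
  have hcπ : Real.pi - φB ≤ Real.pi := by linarith [hφB.1]
  have g1 := aux_tan_ge hc hcπ ht ht2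
  have g2 := aux_tan_ge Real.pi_pos le_rfl ht ht2
  have e : (σi / (Real.pi - φB) + σe / Real.pi) / t ^ 2
      = σi / ((Real.pi - φB) * t ^ 2) + σe / (Real.pi * t ^ 2) := by
    rw [add_div, div_div, div_div]
  rw [e]
  unfold auxG
  have b1 : (Real.pi - φB) * t ^ 2 ≤ t * Real.tan (t * (Real.pi - φB)) := by nlinarith
  have b2 : Real.pi * t ^ 2 ≤ t * Real.tan (t * Real.pi) := by nlinarith
  gcongr <;> positivity

lemma aux_term_ge {σ c t : ℝ} (hσ : 0 < σ) (hc : 0 < c) (hcπ : c ≤ Real.pi)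
    (ht : 0 < t) (ht4 : t ≤ 1/4) :
    σ / (c * t ^ 2) - σ * c ≤ σ / (t * Real.tan (t * c)) := by
  have ht2 : t < 1/2 := by linarith
  have hu : 0 < t * c := by positivity
  have hu1 : t * c ≤ 1 := by nlinarith [Real.pi_le_four]
  have hT : 0 < Real.tan (t * c) := aux_tan_pos hc hcπ ht ht2
  have hTge : t * c ≤ Real.tan (t * c) := aux_tan_ge hc hcπ ht ht2
  have hcos : Real.cos (t * c) ≥ 1 - (t * c) ^ 2 / 2 := Real.one_sub_sq_div_two_le_cos
  have hcos2 : Real.cos (t * c) ≥ 1/2 := by nlinarith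
  have hsin : Real.tan (t * c) * Real.cos (t * c) = Real.sin (t * c) := by
    rw [Real.tan_eq_sin_div_cos]
    field_simp
  have hA : Real.tan (t * c) * Real.cos (t * c) ≤ t * c := by
    rw [hsin]; exact Real.sin_le hu.le
  -- tan u ≤ 2u
  have hT2 : Real.tan (t * c) ≤ 2 * (t * c) := by nlinarith
  -- tan u - u ≤ u^3
  have hsub : Real.tan (t * c) - t * c ≤ (t * c) ^ 3 := by nlinarith
  have h1 : (0:ℝ) < c * t ^ 2 := by positivity
  have h2 : (0:ℝ) < t * Real.tan (t * c) := mul_pos ht hT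
  rw [div_sub' (ne_of_gt h1), div_le_div_iff₀ h1 h2]
  nlinarith [mul_le_mul_of_nonneg_left hsub (by positivity : (0:ℝ) ≤ σ * t),
    mul_le_mul_of_nonneg_left hTge (by positivity : (0:ℝ) ≤ σ * t * (t * c) ^ 2)]

lemma auxG_ge' {σi σe φB t : ℝ} (hσi : 0 < σi) (hσe : 0 < σe)
    (hφB : φB ∈ Set.Ioo 0 Real.pi) (ht : 0 < t) (ht4 : t ≤ 1/4) :
    (σi / (Real.pi - φB) + σe / Real.pi) / t ^ 2 - (σi * (Real.pi - φB) + σe * Real.pi)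
      ≤ auxG σi σe φB t := by
  unfold auxG
  have hc : 0 < Real.pi - φB := by linarith [hφB.2]
  have hcπ : Real.pi - φB ≤ Real.pi := by linarith [hφB.1]
  have e : (σi / (Real.pi - φB) + σe / Real.pi) / t ^ 2
      = σi / ((Real.pi - φB) * t ^ 2) + σe / (Real.pi * t ^ 2) := by
    rw [add_div, div_div, div_div]
  rw [e]
  have i1 := aux_term_ge hσi hc hcπ ht ht4
  have i2 := aux_term_ge hσe Real.pi_pos le_rfl ht ht4
  linarith


lemma auxG_contOn {σi σe φB a b : ℝ} (hφB : φB ∈ Set.Ioo 0 Real.pi)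
    (ha : 0 < a) (hb : b < 1/2) :
    ContinuousOn (auxG σi σe φB) (Set.Icc a b) := by
  have hc : 0 < Real.pi - φB := by linarith [hφB.2]
  have hcπ : Real.pi - φB ≤ Real.pi := by linarith [hφB.1]
  have key : ∀ c : ℝ, 0 < c → c ≤ Real.pi →
      ContinuousOn (fun t => Real.tan (t * c)) (Set.Icc a b) := by
    intro c h1 h2
    apply Real.continuousOn_tan.comp (continuousOn_id.mul continuousOn_const)
    intro t htm
    have ht : 0 < t := lt_of_lt_of_le ha htm.1
    have ht2 : t < 1/2 := lt_of_le_of_lt htm.2 hb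
    have harg := aux_arg h1 h2 ht ht2
    simp only [Set.mem_setOf_eq, Pi.mul_apply, id]
    exact ne_of_gt (Real.cos_pos_of_mem_Ioo ⟨by linarith [harg.1, Real.pi_pos], harg.2⟩)
  have nz : ∀ c : ℝ, 0 < c → c ≤ Real.pi → ∀ t ∈ Set.Icc a b,
      t * Real.tan (t * c) ≠ 0 := by
    intro c h1 h2 t htm
    have ht : 0 < t := lt_of_lt_of_le ha htm.1
    have ht2 : t < 1/2 := lt_of_le_of_lt htm.2 hb
    exact ne_of_gt (mul_pos ht (aux_tan_pos h1 h2 ht ht2))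
  exact (continuousOn_const.div (continuousOn_id.mul (key _ hc hcπ)) (nz _ hc hcπ)).add
    (continuousOn_const.div (continuousOn_id.mul (key _ Real.pi_pos le_rfl))
      (nz _ Real.pi_pos le_rfl))


lemma eqn_iff {σi σe φB δ α : ℝ} (hσi : 0 < σi) (hσe : 0 < σe)
    (hφB : φB ∈ Set.Ioo 0 Real.pi) (hδ : 0 < δ) (hα : 0 < α) (hα2 : α * δ < 1/2) :
    (α * σi * Real.tan (α * δ * Real.pi) =
      σe * α * Real.tan (α * δ * (φB - Real.pi)) *
        (1 - (α * σi / δ) * Real.tan (α * δ * Real.pi) * φB))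
    ↔ auxG σi σe φB (α * δ) = σi * σe * φB / δ ^ 2 := by
  have hc : 0 < Real.pi - φB := by linarith [hφB.2]
  have hcπ : Real.pi - φB ≤ Real.pi := by linarith [hφB.1]
  have ht : 0 < α * δ := mul_pos hα hδ
  have hT1 : 0 < Real.tan (α * δ * (Real.pi - φB)) := aux_tan_pos hc hcπ ht hα2
  have hT2 : 0 < Real.tan (α * δ * Real.pi) := aux_tan_pos Real.pi_pos le_rfl ht hα2
  have hneg : α * δ * (φB - Real.pi) = -(α * δ * (Real.pi - φB)) := by ring
  rw [hneg, Real.tan_neg]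
  unfold auxG
  set T1 := Real.tan (α * δ * (Real.pi - φB)) with hT1d
  set T2 := Real.tan (α * δ * Real.pi) with hT2d
  rw [div_add_div _ _ (by positivity) (by positivity),
    div_eq_div_iff (by positivity) (by positivity)]
  have hαδ2 : (α * δ ^ 2) ≠ 0 := by positivity
  constructor
  · intro h
    field_simp at h
    have hP : σi * T2 * δ + σe * T1 * δ = σi * σe * φB * α * (T1 * T2) :=
      mul_left_cancel₀ hα.ne' (by linear_combination α * h)
    linear_combination (α * δ ^ 2) * hP
  · intro h
    have hP : σi * T2 * δ + σe * T1 * δ = σi * σe * φB * α * (T1 * T2) :=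
      mul_left_cancel₀ hαδ2 (by linear_combination h)
    field_simp
    linear_combination hP



lemma helper_sq_le {Cc Aa α δ : ℝ} (hC : 0 < Cc) (hδ : 0 < δ)
    (h1 : Cc * (α*δ)^2 ≤ Aa * δ^2) : α^2 * Cc ≤ Aa := by
  nlinarith [mul_pos hδ hδ]

lemma helper_step {E α Cc Mm δ : ℝ} (hE : 0 < E) (hC : 0 < Cc) (hα : 0 ≤ α)
    (hαE : α ≤ E) (hMδ : 0 ≤ Mm * δ^2) (h2 : E^2*Cc ≤ α^2*Cc + α^2*(Mm*δ^2)) :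
    (E - α) * Cc ≤ E * Mm * δ^2 := by
  nlinarith [mul_nonneg (mul_nonneg (sub_nonneg.2 hαE) hα) hC.le,
    mul_le_mul_of_nonneg_right (mul_self_le_mul_self hα hαE) hMδ, mul_pos hE hC]

set_option maxHeartbeats 1000000 in
theorem stmt11 (σi σe φB : ℝ) (hσi : 0 < σi) (hσe : 0 < σe)
    (hφB : φB ∈ Set.Ioo 0 Real.pi) :
    ∃ δ0 > (0:ℝ), ∃ K > (0:ℝ), ∀ δ : ℝ, 0 < δ → δ < δ0 →
      (∃! α : ℝ, α ∈ Set.Ioo 0 (1 / (2 * δ)) ∧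
        α * σi * Real.tan (α * δ * Real.pi) =
          σe * α * Real.tan (α * δ * (φB - Real.pi)) *
            (1 - (α * σi / δ) * Real.tan (α * δ * Real.pi) * φB)) ∧
      ∀ α : ℝ, α ∈ Set.Ioo 0 (1 / (2 * δ)) →
        α * σi * Real.tan (α * δ * Real.pi) =
          σe * α * Real.tan (α * δ * (φB - Real.pi)) *
            (1 - (α * σi / δ) * Real.tan (α * δ * Real.pi) * φB) →
        |α - (1 / Real.sqrt φB) *
            Real.sqrt (1 / (σi * Real.pi) + 1 / (σe * (Real.pi - φB)))| ≤
          K * δ ^ 2 := by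
  obtain ⟨hφ1, hφ2⟩ := hφB
  have hφB' : φB ∈ Set.Ioo 0 Real.pi := ⟨hφ1, hφ2⟩
  have hπ := Real.pi_pos
  have hc : 0 < Real.pi - φB := by linarith
  obtain ⟨A, hAdef⟩ : ∃ x, x = σi / (Real.pi - φB) + σe / Real.pi := ⟨_, rfl⟩
  have hA : 0 < A := by rw [hAdef]; positivity
  obtain ⟨C, hCdef⟩ : ∃ x, x = σi * σe * φB := ⟨_, rfl⟩
  have hC : 0 < C := by rw [hCdef]; positivity
  obtain ⟨M, hMdef⟩ : ∃ x, x = σi * (Real.pi - φB) + σe * Real.pi := ⟨_, rfl⟩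
  have hM : 0 < M := by rw [hMdef]; positivity
  obtain ⟨E, hEdef⟩ : ∃ x, x = Real.sqrt (A / C) := ⟨_, rfl⟩
  have hE : 0 < E := by rw [hEdef]; exact Real.sqrt_pos.2 (by positivity)
  have hE2 : E ^ 2 = A / C := by rw [hEdef]; exact Real.sq_sqrt (by positivity)
  have hEC : E ^ 2 * C = A := by rw [hE2]; field_simp
  obtain ⟨ra, hradef⟩ : ∃ x, x = Real.sqrt (A / (2 * C)) := ⟨_, rfl⟩
  have hra : 0 < ra := by rw [hradef]; exact Real.sqrt_pos.2 (by positivity)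
  have hra2 : ra ^ 2 = A / (2 * C) := by rw [hradef]; exact Real.sq_sqrt (by positivity)
  obtain ⟨K, hKdef⟩ : ∃ x, x = E * M / C := ⟨_, rfl⟩
  have hK : 0 < K := by rw [hKdef]; positivity
  have hEv : E = 1 / Real.sqrt φB *
      Real.sqrt (1 / (σi * Real.pi) + 1 / (σe * (Real.pi - φB))) := by
    rw [hEdef]
    have h1 : A / C = (1 / (σi * Real.pi) + 1 / (σe * (Real.pi - φB))) / φB := by
      rw [hAdef, hCdef]; field_simp; ring
    rw [h1, Real.sqrt_div (by positivity) φB]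
    ring
  refine ⟨min (min ((4*ra)⁻¹) (Real.sqrt (C/M))) (min (Real.sqrt (C/(16*A))) ((4*E)⁻¹)),
    lt_min (lt_min (inv_pos.2 (by linarith)) (Real.sqrt_pos.2 (div_pos hC hM)))
      (lt_min (Real.sqrt_pos.2 (div_pos hC (by linarith))) (inv_pos.2 (by linarith))),
    K, hK, ?_⟩
  intro δ hδ hδ0
  have hd1 : δ < (4*ra)⁻¹ :=
    lt_of_lt_of_le hδ0 (le_trans (min_le_left _ _) (min_le_left _ _))
  have hd2 : δ ^ 2 < C / M := by
    have h := lt_of_lt_of_le hδ0 (le_trans (min_le_left _ _) (min_le_right _ _))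
    have h2 := pow_lt_pow_left₀ h hδ.le two_ne_zero
    rwa [Real.sq_sqrt (le_of_lt (div_pos hC hM))] at h2
  have hd3 : δ ^ 2 < C / (16*A) := by
    have h := lt_of_lt_of_le hδ0 (le_trans (min_le_right _ _) (min_le_left _ _))
    have h2 := pow_lt_pow_left₀ h hδ.le two_ne_zero
    rwa [Real.sq_sqrt (le_of_lt (div_pos hC (by linarith)))] at h2
  have hd4 : δ < (4*E)⁻¹ :=
    lt_of_lt_of_le hδ0 (le_trans (min_le_right _ _) (min_le_right _ _))
  -- membership → product bound
  have memfact : ∀ α : ℝ, α ∈ Set.Ioo 0 (1/(2*δ)) → 0 < α ∧ α * δ < 1/2 := by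
    intro α hm
    refine ⟨hm.1, ?_⟩
    have h := mul_lt_mul_of_pos_right hm.2 hδ
    rwa [show 1/(2*δ)*δ = 1/2 by field_simp] at h
  -- the asymptotic bound for any solution
  have hbound : ∀ α : ℝ, α ∈ Set.Ioo 0 (1/(2*δ)) →
      α * σi * Real.tan (α * δ * Real.pi) =
        σe * α * Real.tan (α * δ * (φB - Real.pi)) *
          (1 - (α * σi / δ) * Real.tan (α * δ * Real.pi) * φB) →
      |α - 1 / Real.sqrt φB *
          Real.sqrt (1 / (σi * Real.pi) + 1 / (σe * (Real.pi - φB)))| ≤ K * δ ^ 2 := by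
    intro α hm he
    obtain ⟨hαpos, hα2⟩ := memfact α hm
    have hg : auxG σi σe φB (α*δ) = C/δ^2 := by
      rw [hCdef]; exact (eqn_iff hσi hσe hφB' hδ hαpos hα2).1 he
    have hup := auxG_le hσi hσe hφB' (mul_pos hαpos hδ) hα2
    rw [← hAdef] at hup
    have h1 : C * (α*δ)^2 ≤ A * δ^2 := by
      rw [← div_le_div_iff₀ (by positivity) (by positivity)]
      rw [hg] at hup; exact hup
    have hα2le : α^2 ≤ E^2 := by
      rw [hE2, le_div_iff₀ hC]
      exact helper_sq_le hC hδ h1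
    have hαE : α ≤ E := by
      have h := Real.sqrt_le_sqrt hα2le
      rwa [Real.sqrt_sq hαpos.le, Real.sqrt_sq hE.le] at h
    have hE4 : E * (4*E)⁻¹ = 1/4 := by field_simp
    have ht4 : α * δ ≤ 1/4 := by
      calc α * δ ≤ E * δ := mul_le_mul_of_nonneg_right hαE hδ.le
        _ ≤ E * (4*E)⁻¹ := mul_le_mul_of_nonneg_left hd4.le hE.le
        _ = 1/4 := hE4
    have hlow := auxG_ge' hσi hσe hφB' (mul_pos hαpos hδ) ht4
    rw [← hAdef, ← hMdef, hg] at hlow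
    have h2 : A ≤ α^2*C + α^2*M*δ^2 := by
      have h3 : A/(α*δ)^2 ≤ C/δ^2 + M := by linarith
      rw [div_le_iff₀ (by positivity)] at h3
      calc A ≤ (C/δ^2 + M)*(α*δ)^2 := h3
        _ = α^2*C + α^2*M*δ^2 := by field_simp
    have hstep : (E - α) * C ≤ E * M * δ^2 := by
      apply helper_step hE hC hαpos.le hαE (by positivity)
      rw [hEC]; linarith
    have hfin : E - α ≤ K * δ^2 := by
      have h4 : E - α ≤ E*M*δ^2/C := (le_div_iff₀ hC).2 hstep
      have h5 : K*δ^2 = E*M*δ^2/C := by rw [hKdef]; ring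
      linarith
    rw [← hEv, abs_le]
    constructor
    · linarith
    · linarith [mul_nonneg hK.le (sq_nonneg δ)]
  refine ⟨?_, hbound⟩
  -- existence
  obtain ⟨a, hadef⟩ : ∃ x, x = δ * ra := ⟨_, rfl⟩
  have ha : 0 < a := by rw [hadef]; positivity
  have hr4 : (4*ra)⁻¹ * ra = 1/4 := by rw [mul_inv_rev]; field_simp
  have ha4 : a < 1/4 := by
    calc a = δ * ra := hadef
      _ < (4*ra)⁻¹ * ra := mul_lt_mul_of_pos_right hd1 hra
      _ = 1/4 := hr4
  have hgea : C/δ^2 ≤ auxG σi σe φB a := by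
    have h := auxG_ge' hσi hσe hφB' ha ha4.le
    rw [← hAdef, ← hMdef] at h
    have haa : A / a^2 = 2*C/δ^2 := by
      have h1 : a^2 = δ^2*(A/(2*C)) := by rw [hadef, mul_pow, hra2]
      rw [h1, div_eq_div_iff (by positivity) (by positivity)]
      field_simp
    rw [haa] at h
    have hMle : M ≤ C/δ^2 := by
      rw [le_div_iff₀ (by positivity)]
      rw [lt_div_iff₀ hM] at hd2
      linarith
    have h6 : 2*C/δ^2 = C/δ^2 + C/δ^2 := by ring
    linarith
  have hgeb : auxG σi σe φB (1/4 : ℝ) ≤ C/δ^2 := by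
    have h := auxG_le hσi hσe hφB' (by norm_num) (by norm_num : (1/4:ℝ) < 1/2)
    rw [← hAdef] at h
    have h16 : A / ((1/4:ℝ))^2 = 16*A := by ring
    rw [h16] at h
    have : 16*A ≤ C/δ^2 := by
      rw [le_div_iff₀ (by positivity)]
      rw [lt_div_iff₀ (by positivity : (0:ℝ) < 16*A)] at hd3
      linarith
    linarith
  obtain ⟨t, htm, htg⟩ := intermediate_value_Icc' ha4.le
    (auxG_contOn hφB' ha (by norm_num : (1/4:ℝ) < 1/2)) ⟨hgeb, hgea⟩
  have ht0 : 0 < t := lt_of_lt_of_le ha htm.1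
  have ht4 : t ≤ 1/4 := htm.2
  have ht2 : t < 1/2 := by linarith
  obtain ⟨α0, hα0def⟩ : ∃ x, x = t/δ := ⟨_, rfl⟩
  have hα0 : 0 < α0 := by rw [hα0def]; positivity
  have hα0δ : α0 * δ = t := by rw [hα0def]; exact div_mul_cancel₀ t hδ.ne'
  have hα0mem : α0 ∈ Set.Ioo 0 (1/(2*δ)) := by
    refine ⟨hα0, ?_⟩
    rw [lt_div_iff₀ (by positivity : (0:ℝ) < 2*δ)]
    have : α0 * (2*δ) = 2*t := by rw [hα0def]; field_simp
    rw [this]; linarith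
  have heq0 : α0 * σi * Real.tan (α0 * δ * Real.pi) =
      σe * α0 * Real.tan (α0 * δ * (φB - Real.pi)) *
        (1 - (α0 * σi / δ) * Real.tan (α0 * δ * Real.pi) * φB) := by
    apply (eqn_iff hσi hσe hφB' hδ hα0 (by rw [hα0δ]; exact ht2)).2
    rw [hα0δ, ← hCdef]
    exact htg
  refine ⟨α0, ⟨hα0mem, heq0⟩, ?_⟩
  intro β hβ
  obtain ⟨hβmem, hβeq⟩ := hβ
  obtain ⟨hβpos, hβ2⟩ := memfact β hβmem
  have hgβ : auxG σi σe φB (β*δ) = C/δ^2 := by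
    rw [hCdef]; exact (eqn_iff hσi hσe hφB' hδ hβpos hβ2).1 hβeq
  have hgα0 : auxG σi σe φB (α0*δ) = C/δ^2 := by rw [hα0δ]; exact htg
  have hα02 : α0 * δ < 1/2 := by rw [hα0δ]; exact ht2
  have heqt : β * δ = α0 * δ := by
    rcases lt_trichotomy (β*δ) (α0*δ) with h|h|h
    · exfalso
      have := auxG_anti hσi hσe hφB' (mul_pos hβpos hδ) h hα02
      rw [hgβ, hgα0] at this; linarith
    · exact h
    · exfalso
      have := auxG_anti hσi hσe hφB' (mul_pos hα0 hδ) h hβ2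
      rw [hgβ, hgα0] at this; linarith
  exact mul_right_cancel₀ hδ.ne' heqt
end
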